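/- Let α be a unit-speed non-null Frenet curve of order 3 in a 3-dimensional pseudo-Riemannian manifold, and f smooth with g(∇f,∇f) constant along α, Hessian of f identically zero, and g(∇f,V₃) a nonzero constant. Then ε₀(k₂/k₁)² is constant along α; in particular if ε₀, ε₁ are constant signs, the ratio k₂/k₁ of torsion to curvature is constant (α is a generalized helix with axis ∇f). -/
import Mathlib


/-- The `n = 3` case of Theorem 3.3: for an f-eikonal V₃-slant helix of order 3,
`ε₀(k₂/k₁)²` is constant along `α`; in particular the ratio `k₂/k₁` is constant. -/
theorem stmt_10
    {E : Type*} [AddCommGroup E] [Module ℝ E]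
    (g : ℝ → E → E → ℝ)
    (hg_symm : ∀ t x y, g t x y = g t y x)
    (hg_add : ∀ t x y z, g t (x + y) z = g t x z + g t y z)
    (hg_smul : ∀ t (c : ℝ) x y, g t (c • x) y = c * g t x y)
    (D : (ℝ → E) → (ℝ → E))
    (hcompat : ∀ X Y : ℝ → E, ∀ t : ℝ,
      HasDerivAt (fun s => g s (X s) (Y s)) (g t (D X t) (Y t) + g t (X t) (D Y t)) t)
    (V₁ V₂ V₃ : ℝ → E) (k₁ k₂ : ℝ → ℝ) (ε₀ ε₁ ε₂ : ℝ)
    (hε₀ : ε₀ = 1 ∨ ε₀ = -1) (hε₁ : ε₁ = 1 ∨ ε₁ = -1) (hε₂ : ε₂ = 1 ∨ ε₂ = -1)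
    (hk₁ : ∀ t, 0 < k₁ t) (hk₂ : ∀ t, 0 < k₂ t)
    (h11 : ∀ t, g t (V₁ t) (V₁ t) = ε₀) (h22 : ∀ t, g t (V₂ t) (V₂ t) = ε₁)
    (h33 : ∀ t, g t (V₃ t) (V₃ t) = ε₂)
    (h12 : ∀ t, g t (V₁ t) (V₂ t) = 0) (h13 : ∀ t, g t (V₁ t) (V₃ t) = 0)
    (h23 : ∀ t, g t (V₂ t) (V₃ t) = 0)
    (hf₁ : ∀ t, D V₁ t = k₁ t • V₂ t)
    (hf₂ : ∀ t, D V₂ t = (-(ε₀ * ε₁ * k₁ t)) • V₁ t + k₂ t • V₃ t)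
    (hf₃ : ∀ t, D V₃ t = (-(ε₁ * ε₂ * k₂ t)) • V₂ t)
    (F : ℝ → E)
    (hpar : ∀ t, D F t = 0)
    (c : ℝ) (hc : c ≠ 0)
    (hslant : ∀ t, g t (F t) (V₃ t) = c)
    (hframe : ∃ l₁ l₂ l₃ : ℝ → ℝ, ∀ t, F t = l₁ t • V₁ t + l₂ t • V₂ t + l₃ t • V₃ t)
    (heik : ∃ a : ℝ, ∀ t, g t (F t) (F t) = a) :
    (∃ a : ℝ, ∀ t, ε₀ * (k₂ t / k₁ t) ^ 2 = a) ∧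
    (∃ b : ℝ, ∀ t, k₂ t / k₁ t = b) := by
  have hε₀ne : ε₀ ≠ 0 := by rcases hε₀ with h | h <;> simp [h]
  have hε₁ne : ε₁ ≠ 0 := by rcases hε₁ with h | h <;> simp [h]
  have hε₂ne : ε₂ ≠ 0 := by rcases hε₂ with h | h <;> simp [h]
  -- basic linearity facts
  have hzero : ∀ t (y : E), g t (0 : E) y = 0 := by
    intro t y
    have := hg_smul t 0 y y
    simpa using this
  have hsmulr : ∀ t (r : ℝ) (x y : E), g t x (r • y) = r * g t x y := by
    intro t r x y
    rw [hg_symm, hg_smul, hg_symm]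
  have haddr : ∀ t (x y z : E), g t x (y + z) = g t x y + g t x z := by
    intro t x y z
    rw [hg_symm, hg_add, hg_symm, hg_symm t z]
  -- a_i components
  set a₁ : ℝ → ℝ := fun t => g t (F t) (V₁ t) with ha₁
  set a₂ : ℝ → ℝ := fun t => g t (F t) (V₂ t) with ha₂
  -- derivative of g(F,V₃) is zero since it is constant c
  have ha₂zero : ∀ t, a₂ t = 0 := by
    intro t
    have h1 := hcompat F V₃ t
    rw [hpar t, hf₃ t, hzero, hsmulr] at h1
    have h2 : HasDerivAt (fun s => g s (F s) (V₃ s)) 0 t := by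
      have : (fun s => g s (F s) (V₃ s)) = fun _ => c := funext hslant
      rw [this]; exact hasDerivAt_const t c
    have h3 := h2.unique h1
    have hk : -(ε₁ * ε₂ * k₂ t) ≠ 0 := by
      simp only [neg_ne_zero]
      exact mul_ne_zero (mul_ne_zero hε₁ne hε₂ne) (hk₂ t).ne'
    have h4 := h3
    rw [zero_add] at h4
    show g t (F t) (V₂ t) = 0
    exact (mul_eq_zero.mp h4.symm).resolve_left hk
  -- derivative of g(F,V₂) is zero since a₂ ≡ 0
  have hkey : ∀ t, k₂ t / k₁ t = ε₀ * ε₁ * a₁ t / c := by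
    intro t
    have h1 := hcompat F V₂ t
    rw [hpar t, hf₂ t, hzero, haddr, hsmulr, hsmulr, hslant t] at h1
    have h2 : HasDerivAt (fun s => g s (F s) (V₂ s)) 0 t := by
      have : (fun s => g s (F s) (V₂ s)) = fun _ => 0 := funext ha₂zero
      rw [this]; exact hasDerivAt_const t 0
    have h3 := h2.unique h1
    rw [zero_add] at h3
    -- 0 = -(ε₀ε₁k₁) a₁ + k₂ c
    have hε₀₁ : ε₀ * ε₀ = 1 := by rcases hε₀ with h | h <;> simp [h]
    have hε₁₁ : ε₁ * ε₁ = 1 := by rcases hε₁ with h | h <;> simp [h]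
    have hk₁ne : k₁ t ≠ 0 := (hk₁ t).ne'
    field_simp
    nlinarith [h3, hk₁ t, hk₂ t]
  -- a₁ is constant
  have hconst : ∀ t, a₁ t = a₁ 0 := by
    have hd : ∀ t, HasDerivAt a₁ 0 t := by
      intro t
      have h1 := hcompat F V₁ t
      rw [hpar t, hf₁ t, hzero, hsmulr, zero_add] at h1
      have : k₁ t * a₂ t = 0 := by rw [ha₂zero t, mul_zero]
      rw [ha₂] at this
      simpa [ha₁, this] using h1
    intro t
    have := is_const_of_deriv_eq_zero (fun x => (hd x).differentiableAt)
      (fun x => (hd x).deriv) t 0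
    exact this
  refine ⟨⟨ε₀ * (ε₀ * ε₁ * a₁ 0 / c) ^ 2, fun t => ?_⟩,
          ⟨ε₀ * ε₁ * a₁ 0 / c, fun t => ?_⟩⟩ <;>
    rw [hkey t, hconst t]
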